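/- arXiv:2507.10732 — 6 statements merged into one kernel-verified Lean document; each statement's English description precedes it below -/
import Mathlib

section
/- Let τ : S → (D S)^A be an LMP on a pseudometric space ⟨S,d⟩ and suppose d is a fixpoint of the functional Δ_LP (i.e., Δ_LP(d) = d). Then for every ε > 0, the relation R_ε = {(s,t) | d(s,t) < ε} is an ε-bisimulation. -/
open scoped ENNReal Classical

noncomputable section

def mass {S : Type*} (φ : S → ℝ≥0∞) (X : Set S) : ℝ≥0∞ := ∑' x : X, φ x

def IsSubdist {S : Type*} (φ : S → ℝ≥0∞) : Prop := mass φ Set.univ ≤ 1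

def IsPseudometric {S : Type*} (d : S → S → ℝ≥0∞) : Prop :=
  (∀ x, d x x = 0) ∧ (∀ x y, d x y = d y x) ∧ (∀ x y z, d x z ≤ d x y + d y z)

def Bounded1 {S : Type*} (d : S → S → ℝ≥0∞) : Prop := ∀ x y, d x y ≤ 1

def eball {S : Type*} (d : S → S → ℝ≥0∞) (X : Set S) (ε : ℝ≥0∞) : Set S :=
  {y | ∃ x ∈ X, d x y < ε}

def LP {S : Type*} (d : S → S → ℝ≥0∞) (μ ν : S → ℝ≥0∞) : ℝ≥0∞ :=
  sInf {ε | ∀ X : Set S,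
    mass μ X ≤ mass ν (eball d X ε) + ε ∧ mass ν X ≤ mass μ (eball d X ε) + ε}

def relImg {S : Type*} (R : S → S → Prop) (X : Set S) : Set S := {y | ∃ x ∈ X, R x y}

def IsEpsBisim {S A : Type*} (τ : A → S → S → ℝ≥0∞) (ε : ℝ≥0∞) (R : S → S → Prop) : Prop :=
  Symmetric R ∧ ∀ s t, R s t → ∀ a : A, ∀ X : Set S,
    mass (τ a s) X ≤ mass (τ a t) (relImg R X) + ε

def EpsBisimilar {S A : Type*} (τ : A → S → S → ℝ≥0∞) (ε : ℝ≥0∞) (s t : S) : Prop :=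
  ∃ R, IsEpsBisim τ ε R ∧ R s t

def dstar {S A : Type*} (τ : A → S → S → ℝ≥0∞) (s t : S) : ℝ≥0∞ :=
  sInf {ε | ε ≤ 1 ∧ EpsBisimilar τ ε s t}

def DeltaLP {S A : Type*} (τ : A → S → S → ℝ≥0∞) (d : S → S → ℝ≥0∞) (s₀ s₁ : S) : ℝ≥0∞ :=
  ⨆ a : A, LP d (τ a s₀) (τ a s₁)

theorem stmt6 {S A : Type*} (τ : A → S → S → ℝ≥0∞) (hτ : ∀ a s, IsSubdist (τ a s))
    (d : S → S → ℝ≥0∞) (hd : IsPseudometric d) (hfix : DeltaLP τ d = d)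
    (ε : ℝ≥0∞) (hε : 0 < ε) :
    IsEpsBisim τ ε (fun s t => d s t < ε) := by
  obtain ⟨hrefl, hsymm, htri⟩ := hd
  constructor
  · intro s t h
    simpa [hsymm t s] using h
  · intro s t hst a X
    have hLP : LP d (τ a s) (τ a t) < ε := by
      calc LP d (τ a s) (τ a t) ≤ DeltaLP τ d s t := le_iSup (fun a => LP d (τ a s) (τ a t)) a
        _ = d s t := by rw [hfix]
        _ < ε := hst
    obtain ⟨ε', hε'mem, hε'lt⟩ := exists_lt_of_csInf_lt
      (by
        rcases Set.eq_empty_or_nonempty {ε | ∀ X : Set S,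
          mass (τ a s) X ≤ mass (τ a t) (eball d X ε) + ε ∧
          mass (τ a t) X ≤ mass (τ a s) (eball d X ε) + ε} with h | h
        · exfalso
          have : LP d (τ a s) (τ a t) = ⊤ := by
            simp [LP, h]
          simp [this] at hLP
        · exact h) hLP
    have key := (hε'mem X).1
    have hsub : eball d X ε' ⊆ relImg (fun s t => d s t < ε) X := by
      intro y ⟨x, hx, hxy⟩
      exact ⟨x, hx, lt_trans hxy hε'lt⟩
    have hmono : mass (τ a t) (eball d X ε') ≤ mass (τ a t) (relImg (fun s t => d s t < ε) X) :=
      ENNReal.tsum_comp_le_tsum_of_injective (Set.inclusion_injective hsub)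
        (fun y => τ a t y)
    calc mass (τ a s) X ≤ mass (τ a t) (eball d X ε') + ε' := key
      _ ≤ mass (τ a t) (relImg (fun s t => d s t < ε) X) + ε :=
          add_le_add hmono hε'lt.le
end
end

section
/- Let τ : S → (D S)^A be an LMP and let d* be the ε-distance, d*(s,t) = inf {ε | s ∼_ε t}. Then every fixpoint d of Δ_LP satisfies d(s,t) ≥ d*(s,t) for all s,t; i.e., d* dominates every fixpoint (equivalently, d* is above every fixpoint in the order d₁ ⊑ d₂ ⇔ d₁ ≥ d₂ pointwise). -/
open scoped ENNReal Classical

noncomputable section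

theorem stmt7 {S A : Type*} (τ : A → S → S → ℝ≥0∞) (hτ : ∀ a s, IsSubdist (τ a s))
    (d : S → S → ℝ≥0∞) (hd : IsPseudometric d) (hfix : DeltaLP τ d = d) :
    ∀ s t : S, dstar τ s t ≤ d s t := by
  have mass_mono : ∀ (φ : S → ℝ≥0∞) {X Y : Set S}, X ⊆ Y → mass φ X ≤ mass φ Y := by
    intro φ X Y h
    simp only [mass, tsum_subtype]
    exact Summable.tsum_le_tsum
      (fun x => Set.indicator_le_indicator_of_subset h (fun _ => zero_le) x)
      ENNReal.summable ENNReal.summable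
  have hmass1 : ∀ (a : A) (s : S) (X : Set S), mass (τ a s) X ≤ 1 := fun a s X =>
    le_trans (mass_mono _ (Set.subset_univ X)) (hτ a s)
  have hone : ∀ s t : S, dstar τ s t ≤ 1 := by
    intro s t
    apply sInf_le
    refine ⟨le_refl 1, fun _ _ => True, ⟨fun _ _ _ => trivial, ?_⟩, trivial⟩
    intro s' t' _ a X
    exact le_trans (hmass1 a s' X) (le_add_self)
  intro s t
  refine le_of_forall_gt_imp_ge_of_dense fun ε hε => ?_
  rcases le_or_gt ε 1 with hε1 | hε1
  · apply sInf_le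
    refine ⟨hε1, fun x y => d x y < ε, ⟨?_, ?_⟩, hε⟩
    · intro x y hxy; rwa [hd.2.1]
    · intro x y hxy a X
      have hLP : LP d (τ a x) (τ a y) < ε := by
        have : DeltaLP τ d x y = d x y := congrFun (congrFun hfix x) y
        calc LP d (τ a x) (τ a y) ≤ DeltaLP τ d x y := le_iSup (fun a => LP d (τ a x) (τ a y)) a
          _ = d x y := this
          _ < ε := hxy
      rw [LP, sInf_lt_iff] at hLP
      obtain ⟨ε', hε'mem, hε'lt⟩ := hLP
      have h1 := (hε'mem X).1
      calc mass (τ a x) X ≤ mass (τ a y) (eball d X ε') + ε' := h1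
        _ ≤ mass (τ a y) (relImg (fun x y => d x y < ε) X) + ε := by
            refine add_le_add (mass_mono _ ?_) hε'lt.le
            rintro z ⟨x', hx', hdx'⟩
            exact ⟨x', hx', hdx'.trans hε'lt⟩
  · exact (hone s t).trans hε1.le
end
end

section
/- Let τ : S → (D S)^A be an LMP. The ε-distance d*(s,t) = inf {ε ∈ [0,1] | s ∼_ε t} is a fixpoint of the functional Δ_LP, i.e., for all s₀, s₁ ∈ S, Δ_LP(d*)(s₀,s₁) = d*(s₀,s₁). -/
open scoped ENNReal Classical

noncomputable section

lemma mass_mono {S : Type*} (φ : S → ℝ≥0∞) {X Y : Set S} (h : X ⊆ Y) :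
    mass φ X ≤ mass φ Y := by
  unfold mass
  rw [tsum_subtype, tsum_subtype]
  exact ENNReal.tsum_le_tsum fun x =>
    Set.indicator_le_indicator_of_subset h (fun _ => zero_le) x

lemma dstar_symm {S A : Type*} (τ : A → S → S → ℝ≥0∞) (s t : S) :
    dstar τ s t = dstar τ t s := by
  unfold dstar
  congr 1
  ext ε
  constructor <;> rintro ⟨h1, R, hR, hst⟩ <;> exact ⟨h1, R, hR, hR.1 hst⟩

lemma dstar_le_one {S A : Type*} (τ : A → S → S → ℝ≥0∞) (hτ : ∀ a s, IsSubdist (τ a s))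
    (s t : S) : dstar τ s t ≤ 1 := by
  apply sInf_le
  refine ⟨le_refl 1, fun _ _ => True, ⟨fun _ _ _ => trivial, ?_⟩, trivial⟩
  intro x y _ a X
  calc mass (τ a x) X ≤ mass (τ a x) Set.univ := mass_mono _ (Set.subset_univ X)
    _ ≤ 1 := hτ a x
    _ ≤ _ + 1 := le_add_self

theorem stmt8 {S A : Type*} (τ : A → S → S → ℝ≥0∞) (hτ : ∀ a s, IsSubdist (τ a s)) :
    ∀ s₀ s₁ : S, DeltaLP τ (dstar τ) s₀ s₁ = dstar τ s₀ s₁ := by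
  intro s₀ s₁
  apply le_antisymm
  · -- Δ_LP(d*) ≤ d*
    apply iSup_le; intro a
    apply le_sInf
    rintro ε ⟨hε1, R, hRbis, hR01⟩
    obtain ⟨hsym, hbis⟩ := hRbis
    apply le_of_forall_gt_imp_ge_of_dense
    intro δ hδ
    apply sInf_le
    have key : ∀ x y, R x y → ∀ X : Set S,
        mass (τ a x) X ≤ mass (τ a y) (eball (dstar τ) X δ) + δ := by
      intro x y hxy X
      calc mass (τ a x) X ≤ mass (τ a y) (relImg R X) + ε := hbis x y hxy a X
        _ ≤ mass (τ a y) (eball (dstar τ) X δ) + δ := by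
            refine add_le_add (mass_mono _ ?_) hδ.le
            rintro z ⟨w, hwX, hwz⟩
            exact ⟨w, hwX, lt_of_le_of_lt (sInf_le ⟨hε1, R, ⟨hsym, hbis⟩, hwz⟩) hδ⟩
    exact fun X => ⟨key s₀ s₁ hR01 X, key s₁ s₀ (hsym hR01) X⟩
  · -- d* ≤ Δ_LP(d*)
    rcases le_or_gt 1 (DeltaLP τ (dstar τ) s₀ s₁) with h1 | _
    · exact (dstar_le_one τ hτ s₀ s₁).trans h1
    apply le_of_forall_gt_imp_ge_of_dense
    intro δ hδ
    rcases le_or_gt δ 1 with hδ1 | hδ1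
    swap
    · exact (dstar_le_one τ hτ s₀ s₁).trans hδ1.le
    apply sInf_le
    refine ⟨hδ1, ?_⟩
    set R : S → S → Prop := fun x y =>
      dstar τ x y < δ ∨ (x = s₀ ∧ y = s₁) ∨ (x = s₁ ∧ y = s₀) with hRdef
    refine ⟨R, ⟨?_, ?_⟩, Or.inr (Or.inl ⟨rfl, rfl⟩)⟩
    · intro x y hxy
      rcases hxy with h | h | h
      · exact Or.inl (by rwa [dstar_symm])
      · exact Or.inr (Or.inr ⟨h.2, h.1⟩)
      · exact Or.inr (Or.inl ⟨h.2, h.1⟩)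
    · intro x y hxy a X
      -- the case coming from the LP inequality at (s₀, s₁)
      have hLPlt : LP (dstar τ) (τ a s₀) (τ a s₁) < δ :=
        lt_of_le_of_lt (le_iSup (fun a => LP (dstar τ) (τ a s₀) (τ a s₁)) a) hδ
      have hLP := (sInf_lt_iff).mp hLPlt
      obtain ⟨ε', hε'mem, hε'lt⟩ := hLP
      have hball : ∀ Y : Set S, eball (dstar τ) Y ε' ⊆ relImg R Y := by
        rintro Y z ⟨w, hwY, hwz⟩
        exact ⟨w, hwY, Or.inl (lt_of_lt_of_le hwz hε'lt.le)⟩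
      rcases hxy with h | ⟨hx, hy⟩ | ⟨hx, hy⟩
      · -- d* x y < δ : use a witnessing ε-bisimulation
        obtain ⟨ε, ⟨hε1, R', ⟨hs', hb'⟩, hxy'⟩, hεlt⟩ := (sInf_lt_iff).mp h
        calc mass (τ a x) X ≤ mass (τ a y) (relImg R' X) + ε := hb' x y hxy' a X
          _ ≤ mass (τ a y) (relImg R X) + δ := by
              refine add_le_add (mass_mono _ ?_) hεlt.le
              rintro z ⟨w, hwX, hwz⟩
              refine ⟨w, hwX, Or.inl (lt_of_le_of_lt ?_ hεlt)⟩
              exact sInf_le ⟨hε1, R', ⟨hs', hb'⟩, hwz⟩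
      · subst hx; subst hy
        calc mass (τ a x) X ≤ mass (τ a y) (eball (dstar τ) X ε') + ε' := (hε'mem X).1
          _ ≤ mass (τ a y) (relImg R X) + δ :=
              add_le_add (mass_mono _ (hball X)) hε'lt.le
      · subst hx; subst hy
        calc mass (τ a x) X ≤ mass (τ a y) (eball (dstar τ) X ε') + ε' := (hε'mem X).2
          _ ≤ mass (τ a y) (relImg R X) + δ :=
              add_le_add (mass_mono _ (hball X)) hε'lt.le
end
end

section
/- If s ∼_{ε₁} u and u ∼_{ε₂} t then s ∼_{ε₁+ε₂} t; that is, the composition of an ε₁-bisimulation and an ε₂-bisimulation is contained in an (ε₁+ε₂)-bisimulation. Consequently, the ε-distance d*(s,t) = inf {ε | s ∼_ε t} satisfies the triangle inequality. -/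
open scoped ENNReal Classical

noncomputable section

lemma bisim_mono {S A : Type*} {τ : A → S → S → ℝ≥0∞} {ε ε' : ℝ≥0∞} {R : S → S → Prop}
    (hle : ε ≤ ε') (h : IsEpsBisim τ ε R) : IsEpsBisim τ ε' R :=
  ⟨h.1, fun s t hst a X => (h.2 s t hst a X).trans (add_le_add_right hle _)⟩

lemma full_bisim {S A : Type*} (τ : A → S → S → ℝ≥0∞) (hτ : ∀ a s, IsSubdist (τ a s)) :
    IsEpsBisim τ 1 (fun _ _ : S => True) := by
  refine ⟨fun _ _ _ => trivial, fun s t _ a X => ?_⟩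
  calc mass (τ a s) X ≤ mass (τ a s) Set.univ := mass_mono _ (Set.subset_univ _)
    _ ≤ 1 := hτ a s
    _ ≤ _ := le_add_self

lemma comp_bisim {S A : Type*} (τ : A → S → S → ℝ≥0∞) :
    ∀ (s u t : S) (ε₁ ε₂ : ℝ≥0∞),
      EpsBisimilar τ ε₁ s u → EpsBisimilar τ ε₂ u t → EpsBisimilar τ (ε₁ + ε₂) s t := by
  rintro s u t ε₁ ε₂ ⟨R₁, h₁, hsu⟩ ⟨R₂, h₂, hut⟩
  refine ⟨fun x y => (∃ z, R₁ x z ∧ R₂ z y) ∨ (∃ z, R₂ x z ∧ R₁ z y), ⟨?_, ?_⟩, Or.inl ⟨u, hsu, hut⟩⟩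
  · rintro x y (⟨z, h1, h2⟩ | ⟨z, h1, h2⟩)
    · exact Or.inr ⟨z, h₂.1 h2, h₁.1 h1⟩
    · exact Or.inl ⟨z, h₁.1 h2, h₂.1 h1⟩
  · rintro x y (⟨z, h1, h2⟩ | ⟨z, h1, h2⟩) a X
    · calc mass (τ a x) X ≤ mass (τ a z) (relImg R₁ X) + ε₁ := h₁.2 x z h1 a X
        _ ≤ (mass (τ a y) (relImg R₂ (relImg R₁ X)) + ε₂) + ε₁ :=
            add_le_add_left (h₂.2 z y h2 a _) _
        _ ≤ _ := by
            rw [add_assoc, add_comm ε₂ ε₁]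
            refine add_le_add_left (mass_mono _ ?_) _
            rintro w ⟨v, ⟨x', hx', hxv⟩, hvw⟩
            exact ⟨x', hx', Or.inl ⟨v, hxv, hvw⟩⟩
    · calc mass (τ a x) X ≤ mass (τ a z) (relImg R₂ X) + ε₂ := h₂.2 x z h1 a X
        _ ≤ (mass (τ a y) (relImg R₁ (relImg R₂ X)) + ε₁) + ε₂ :=
            add_le_add_left (h₁.2 z y h2 a _) _
        _ ≤ _ := by
            rw [add_assoc]
            refine add_le_add_left (mass_mono _ ?_) _
            rintro w ⟨v, ⟨x', hx', hxv⟩, hvw⟩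
            exact ⟨x', hx', Or.inr ⟨v, hxv, hvw⟩⟩

theorem stmt10 {S A : Type*} (τ : A → S → S → ℝ≥0∞) (hτ : ∀ a s, IsSubdist (τ a s)) :
    (∀ (s u t : S) (ε₁ ε₂ : ℝ≥0∞),
      EpsBisimilar τ ε₁ s u → EpsBisimilar τ ε₂ u t → EpsBisimilar τ (ε₁ + ε₂) s t) ∧
    (∀ s u t : S, dstar τ s t ≤ dstar τ s u + dstar τ u t) := by
  refine ⟨comp_bisim τ, fun s u t => ?_⟩
  have hmem : ∀ x y : S, (1 : ℝ≥0∞) ∈ {ε | ε ≤ 1 ∧ EpsBisimilar τ ε x y} :=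
    fun x y => ⟨le_rfl, ⟨_, full_bisim τ hτ, trivial⟩⟩
  have hne : ∀ x y : S, {ε | ε ≤ 1 ∧ EpsBisimilar τ ε x y}.Nonempty :=
    fun x y => ⟨1, hmem x y⟩
  have hle1 : ∀ x y : S, dstar τ x y ≤ 1 := fun x y => sInf_le (hmem x y)
  have key : ∀ ε₁ ∈ {ε | ε ≤ 1 ∧ EpsBisimilar τ ε s u},
      ∀ ε₂ ∈ {ε | ε ≤ 1 ∧ EpsBisimilar τ ε u t}, dstar τ s t ≤ ε₁ + ε₂ := by
    rintro ε₁ ⟨h1, hb1⟩ ε₂ ⟨h2, hb2⟩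
    by_cases h : ε₁ + ε₂ ≤ 1
    · exact sInf_le ⟨h, comp_bisim τ s u t ε₁ ε₂ hb1 hb2⟩
    · exact (hle1 s t).trans (le_of_not_ge h)
  refine ENNReal.le_of_forall_pos_le_add fun δ hδ hfin => ?_
  have hδ2 : (0 : ℝ≥0∞) < δ / 2 := ENNReal.half_pos (ENNReal.coe_pos.mpr hδ).ne'
  have hlt1 : dstar τ s u < dstar τ s u + δ / 2 :=
    ENNReal.lt_add_right (((hle1 s u).trans_lt ENNReal.one_lt_top).ne) hδ2.ne'
  have hlt2 : dstar τ u t < dstar τ u t + δ / 2 :=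
    ENNReal.lt_add_right (((hle1 u t).trans_lt ENNReal.one_lt_top).ne) hδ2.ne'
  obtain ⟨ε₁, hε₁, hε₁lt⟩ := exists_lt_of_csInf_lt (hne s u) hlt1
  obtain ⟨ε₂, hε₂, hε₂lt⟩ := exists_lt_of_csInf_lt (hne u t) hlt2
  calc dstar τ s t ≤ ε₁ + ε₂ := key ε₁ hε₁ ε₂ hε₂
    _ ≤ (dstar τ s u + δ / 2) + (dstar τ u t + δ / 2) := add_le_add hε₁lt.le hε₂lt.le
    _ = dstar τ s u + dstar τ u t + δ := by
        rw [add_add_add_comm, ENNReal.add_halves]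
end
end

section
/- The multiplication μ of the subdistribution monad is not nonexpansive with respect to the Lévy-Prokhorov lifting: there exist a two-point metric space {⊥,•} with d(⊥,•)=1, subdistributions a, b, c on it, and distributions φ = 1_a and ψ = (1−ε)1_b + ε 1_c over subdistributions (for 0 < ε < 1), such that δ_LP(μφ, μψ) ≥ ε(2−ε) > ε = δ_LP^{δ_LP}(φ, ψ). Concretely, with a = 1_⊥, b = (1−ε)1_⊥ + ε 1_•, c = 1_•: δ_LP^d(a,b) = ε, δ_LP^{δ_LP^d}(φ,ψ) = ε, μφ = a, μψ = (1−ε)² 1_⊥ + (2−ε)ε 1_•, and δ_LP^d(μφ, μψ) ≥ ε(2−ε). -/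
open scoped ENNReal Classical

noncomputable section

def dirac {S : Type*} (x : S) : S → ℝ≥0∞ := fun y => if y = x then 1 else 0

def mult {S : Type*} (Φ : (S → ℝ≥0∞) → ℝ≥0∞) : S → ℝ≥0∞ :=
  fun x => ∑' φ : S → ℝ≥0∞, Φ φ * φ x

/-- The two-point metric space `{⊥, •}` represented as `Bool` (`false = ⊥`, `true = •`). -/
def d2 : Bool → Bool → ℝ≥0∞ := fun x y => if x = y then 0 else 1

def aDist : Bool → ℝ≥0∞ := dirac false

def bDist (ε : ℝ≥0∞) : Bool → ℝ≥0∞ := fun x => if x = true then ε else 1 - ε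

def cDist : Bool → ℝ≥0∞ := dirac true

def phiDist : (Bool → ℝ≥0∞) → ℝ≥0∞ := dirac aDist

def psiDist (ε : ℝ≥0∞) : (Bool → ℝ≥0∞) → ℝ≥0∞ :=
  fun ρ => if ρ = bDist ε then 1 - ε else if ρ = cDist then ε else 0

/- ## Auxiliary lemmas -/

lemma sInf_Ioi_eq (t : ℝ≥0∞) : sInf (Set.Ioi t) = t := by
  refine le_antisymm ?_ (le_sInf fun b hb => hb.le)
  by_contra hcon
  push_neg at hcon
  obtain ⟨c, hc1, hc2⟩ := exists_between hcon
  exact absurd (sInf_le (Set.mem_Ioi.mpr hc1)) (not_le.mpr hc2)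

lemma mass_eq_tsum_indicator {S : Type*} (φ : S → ℝ≥0∞) (X : Set S) :
    mass φ X = ∑' x, X.indicator φ x := tsum_subtype X φ

lemma mass_dirac {S : Type*} (x : S) (X : Set S) :
    mass (dirac x) X = if x ∈ X then 1 else 0 := by
  rw [mass_eq_tsum_indicator, tsum_eq_single x]
  · simp [Set.indicator_apply, dirac]
  · intro b hb; simp [Set.indicator_apply, dirac, hb]

lemma mass_pair {S : Type*} {φ : S → ℝ≥0∞} {u v : S} (huv : u ≠ v)
    (hsupp : ∀ x, x ≠ u → x ≠ v → φ x = 0) (X : Set S) :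
    mass φ X = (if u ∈ X then φ u else 0) + (if v ∈ X then φ v else 0) := by
  rw [mass_eq_tsum_indicator, tsum_eq_sum (s := ({u, v} : Finset S)) ?_]
  · rw [Finset.sum_pair huv]; simp [Set.indicator_apply]
  · intro x hx
    simp only [Finset.mem_insert, Finset.mem_singleton] at hx
    push_neg at hx
    simp [Set.indicator_apply, hsupp x hx.1 hx.2]

lemma mass_bool (φ : Bool → ℝ≥0∞) (X : Set Bool) :
    mass φ X = (if false ∈ X then φ false else 0) + (if true ∈ X then φ true else 0) :=
  mass_pair (by simp) (fun x hx1 hx2 => by cases x <;> simp_all) X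

lemma LP_comm {S : Type*} (d : S → S → ℝ≥0∞) (μ ν : S → ℝ≥0∞) :
    LP d μ ν = LP d ν μ := by
  unfold LP
  congr 1
  ext r
  exact ⟨fun h X => (h X).symm, fun h X => (h X).symm⟩

lemma subset_eball_d2 {X : Set Bool} {r : ℝ≥0∞} (hr : 0 < r) : X ⊆ eball d2 X r :=
  fun y hy => ⟨y, hy, by simpa [d2] using hr⟩

lemma LP_ab (ε : ℝ≥0∞) (h0 : 0 < ε) (h1 : ε < 1) : LP d2 aDist (bDist ε) = ε := by
  have hsub : 1 - ε + ε = 1 := tsub_add_cancel_of_le h1.le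
  apply le_antisymm
  · refine le_of_le_of_eq (sInf_le_sInf ?_) (sInf_Ioi_eq ε)
    intro r hr
    have hrε : ε < r := hr
    have hr0 : 0 < r := h0.trans hrε
    intro X
    have key : mass aDist X ≤ mass (bDist ε) X + ε ∧
        mass (bDist ε) X ≤ mass aDist X + ε := by
      rw [mass_bool aDist, mass_bool (bDist ε)]
      by_cases hf : false ∈ X <;> by_cases ht : true ∈ X
      · simp [hf, ht, aDist, dirac, bDist]
        exact ⟨by rw [hsub]; exact le_self_add, by rw [hsub]; exact le_self_add⟩
      · simp [hf, ht, aDist, dirac, bDist]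
        exact ⟨hsub.ge, le_self_add.trans le_self_add⟩
      · simp [hf, ht, aDist, dirac, bDist]
      · simp [hf, ht]
    constructor
    · exact key.1.trans (add_le_add (mass_mono _ (subset_eball_d2 hr0)) hrε.le)
    · exact key.2.trans (add_le_add (mass_mono _ (subset_eball_d2 hr0)) hrε.le)
  · refine le_sInf fun r hr => ?_
    have h2 := (hr {true}).2
    rw [mass_bool (bDist ε)] at h2
    simp only [Set.mem_singleton_iff, if_true, if_pos rfl, bDist] at h2
    by_cases hmem : false ∈ eball d2 {true} r
    · obtain ⟨x, hx, hd⟩ := hmem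
      rw [Set.mem_singleton_iff] at hx; subst hx
      have : (1:ℝ≥0∞) < r := by simpa [d2] using hd
      exact (h1.trans this).le
    · rw [show aDist = dirac false from rfl, mass_dirac, if_neg hmem] at h2
      simpa using h2

lemma one_le_LP_ac : (1:ℝ≥0∞) ≤ LP d2 aDist cDist := by
  refine le_sInf fun r hr => ?_
  have h2 := (hr {false}).1
  rw [show aDist = dirac false from rfl, mass_dirac, if_pos (Set.mem_singleton _)] at h2
  by_cases hmem : true ∈ eball d2 {false} r
  · obtain ⟨x, hx, hd⟩ := hmem
    rw [Set.mem_singleton_iff] at hx; subst hx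
    exact le_of_lt (by simpa [d2] using hd)
  · rw [show cDist = dirac true from rfl, mass_dirac, if_neg hmem] at h2
    simpa using h2

lemma b_ne_c {ε : ℝ≥0∞} (h1 : ε < 1) : bDist ε ≠ cDist := by
  intro h
  have h' := congrFun h false
  simp only [bDist, cDist, dirac, if_neg (by simp : ¬(false = true))] at h'
  exact absurd (tsub_eq_zero_iff_le.mp h') (not_le.mpr h1)

lemma mass_psi {ε : ℝ≥0∞} (h1 : ε < 1) (X : Set (Bool → ℝ≥0∞)) :
    mass (psiDist ε) X =
      (if bDist ε ∈ X then 1 - ε else 0) + (if cDist ∈ X then ε else 0) := by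
  rw [mass_pair (b_ne_c h1) (fun ρ hb hc => by simp [psiDist, hb, hc]) X]
  congr 1
  · split
    · simp [psiDist]
    · rfl
  · split
    · simp [psiDist, (b_ne_c h1).symm]
    · rfl

lemma mass_phi (X : Set (Bool → ℝ≥0∞)) :
    mass phiDist X = if aDist ∈ X then 1 else 0 := mass_dirac aDist X

lemma LP2 (ε : ℝ≥0∞) (h0 : 0 < ε) (h1 : ε < 1) :
    LP (LP d2) phiDist (psiDist ε) = ε := by
  have hab := LP_ab ε h0 h1
  have hsub : 1 - ε + ε = 1 := tsub_add_cancel_of_le h1.le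
  apply le_antisymm
  · refine le_of_le_of_eq (sInf_le_sInf ?_) (sInf_Ioi_eq ε)
    intro r hr
    have hrε : ε < r := hr
    intro X
    constructor
    · rw [mass_phi]
      by_cases ha : aDist ∈ X
      · rw [if_pos ha]
        have hb : bDist ε ∈ eball (LP d2) X r := ⟨aDist, ha, by rw [hab]; exact hrε⟩
        have hmb : (1:ℝ≥0∞) - ε ≤ mass (psiDist ε) (eball (LP d2) X r) := by
          refine le_trans ?_ (mass_mono _ (Set.singleton_subset_iff.mpr hb))
          rw [mass_psi h1]
          simp [Set.mem_singleton_iff, (b_ne_c h1).symm]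
        calc (1:ℝ≥0∞) = (1-ε) + ε := hsub.symm
          _ ≤ mass (psiDist ε) (eball (LP d2) X r) + r := add_le_add hmb hrε.le
      · rw [if_neg ha]; exact zero_le
    · rw [mass_psi h1]
      have hcle : (if cDist ∈ X then ε else 0) ≤ ε := by split <;> simp
      by_cases hbX : bDist ε ∈ X
      · have haB : aDist ∈ eball (LP d2) X r :=
          ⟨bDist ε, hbX, by rw [LP_comm, hab]; exact hrε⟩
        rw [if_pos hbX]
        calc (1-ε) + (if cDist ∈ X then ε else 0) ≤ (1-ε) + ε := add_le_add le_rfl hcle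
          _ = 1 := hsub
          _ ≤ mass phiDist (eball (LP d2) X r) + r := by
              rw [mass_phi, if_pos haB]; exact le_self_add
      · rw [if_neg hbX, zero_add]
        exact hcle.trans (hrε.le.trans le_add_self)
  · refine le_sInf fun r hr => ?_
    by_contra hcon
    push_neg at hcon
    have h2 := (hr {aDist}).1
    rw [mass_phi, if_pos (Set.mem_singleton _), mass_psi h1] at h2
    have hbb : bDist ε ∉ eball (LP d2) {aDist} r := by
      rintro ⟨x, hx, hd⟩
      rw [Set.mem_singleton_iff] at hx; subst hx
      rw [hab] at hd
      exact absurd hd (not_lt.mpr hcon.le)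
    have hcc : cDist ∉ eball (LP d2) {aDist} r := by
      rintro ⟨x, hx, hd⟩
      rw [Set.mem_singleton_iff] at hx; subst hx
      exact absurd (one_le_LP_ac.trans_lt hd) (not_lt.mpr ((hcon.trans h1).le))
    rw [if_neg hbb, if_neg hcc] at h2
    simp only [add_zero, zero_add] at h2
    exact absurd (h2.trans_lt (hcon.trans h1)) (lt_irrefl _)

lemma mult_phi : mult phiDist = aDist := by
  funext x
  unfold mult
  rw [tsum_eq_single aDist]
  · simp [phiDist, dirac]
  · intro φ hφ; simp [phiDist, dirac, hφ]

lemma mult_psi {ε : ℝ≥0∞} (h1 : ε < 1) :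
    mult (psiDist ε) =
      (fun x : Bool => if x = true then (2 - ε) * ε else (1 - ε) * (1 - ε)) := by
  have hεt : ε ≠ ⊤ := (h1.trans ENNReal.one_lt_top).ne
  funext x
  unfold mult
  rw [tsum_eq_sum (s := ({bDist ε, cDist} : Finset (Bool → ℝ≥0∞))) ?_]
  · rw [Finset.sum_pair (b_ne_c h1)]
    have hb : psiDist ε (bDist ε) = 1 - ε := by simp [psiDist]
    have hc : psiDist ε cDist = ε := by simp [psiDist, (b_ne_c h1).symm]
    rw [hb, hc]
    cases x with
    | false => simp [bDist, cDist, dirac]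
    | true =>
      simp only [bDist, cDist, dirac, if_pos rfl, if_true, mul_one]
      rw [ENNReal.sub_mul (fun _ _ => hεt), one_mul,
        ENNReal.sub_mul (fun _ _ => hεt),
        two_mul, ENNReal.sub_add_eq_add_sub (mul_le_of_le_one_right' h1.le)
          (ENNReal.mul_ne_top hεt hεt)]
  · intro φ hφ
    simp only [Finset.mem_insert, Finset.mem_singleton] at hφ
    push_neg at hφ
    simp [psiDist, hφ.1, hφ.2]

lemma aux_le_one {e : ℝ≥0∞} (he : e ≤ 1) : e * (2 - e) ≤ 1 := by
  have het : e ≠ ⊤ := (lt_of_le_of_lt he ENNReal.one_lt_top).ne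
  lift e to NNReal using het
  rw [show (2:ℝ≥0∞) = ((2:NNReal):ℝ≥0∞) by norm_cast, ← ENNReal.coe_sub, ← ENNReal.coe_mul,
    ← ENNReal.coe_one, ENNReal.coe_le_coe]
  rw [← ENNReal.coe_one, ENNReal.coe_le_coe] at he
  rw [← NNReal.coe_le_coe, NNReal.coe_mul, NNReal.coe_sub (he.trans (by norm_num)),
    NNReal.coe_one]
  push_cast
  have h1 : (e:ℝ) ≤ 1 := he
  have h2 : (0:ℝ) ≤ e := e.coe_nonneg
  nlinarith

lemma P5 (ε : ℝ≥0∞) (h0 : 0 < ε) (h1 : ε < 1) :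
    ε * (2 - ε) ≤ LP d2 (mult phiDist) (mult (psiDist ε)) := by
  rw [mult_phi, mult_psi h1]
  refine le_sInf fun r hr => ?_
  have h2 := (hr {true}).2
  rw [mass_bool (fun x : Bool => if x = true then (2 - ε) * ε else (1 - ε) * (1 - ε))] at h2
  simp only [Set.mem_singleton_iff, if_pos rfl, if_true] at h2
  norm_num at h2
  by_cases hmem : false ∈ eball d2 {true} r
  · obtain ⟨x, hx, hd⟩ := hmem
    rw [Set.mem_singleton_iff] at hx; subst hx
    have h1r : (1:ℝ≥0∞) < r := by simpa [d2] using hd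
    exact (aux_le_one h1.le).trans h1r.le
  · rw [show aDist = dirac false from rfl, mass_dirac, if_neg hmem, zero_add] at h2
    rw [mul_comm]
    exact h2

theorem stmt17 (ε : ℝ≥0∞) (h0 : 0 < ε) (h1 : ε < 1) :
    LP d2 aDist (bDist ε) = ε ∧
    LP (LP d2) phiDist (psiDist ε) = ε ∧
    mult phiDist = aDist ∧
    mult (psiDist ε) =
      (fun x : Bool => if x = true then (2 - ε) * ε else (1 - ε) * (1 - ε)) ∧
    ε * (2 - ε) ≤ LP d2 (mult phiDist) (mult (psiDist ε)) ∧
    LP (LP d2) phiDist (psiDist ε) < LP d2 (mult phiDist) (mult (psiDist ε)) := by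
  have hlt : ε < ε * (2 - ε) := by
    conv_lhs => rw [← mul_one ε]
    rw [ENNReal.mul_lt_mul_iff_right h0.ne' (h1.trans ENNReal.one_lt_top).ne]
    rw [lt_tsub_iff_right]
    calc (1:ℝ≥0∞) + ε < 1 + 1 := ENNReal.add_lt_add_left (by norm_num) h1
      _ = 2 := one_add_one_eq_two
  refine ⟨LP_ab ε h0 h1, LP2 ε h0 h1, mult_phi, mult_psi h1, P5 ε h0 h1, ?_⟩
  rw [LP2 ε h0 h1]
  exact hlt.trans_le (P5 ε h0 h1)

end
end

section
/- Let (X,c) and (Y,d) be coalgebras of the discrete subdistribution functor D (Markov chains). A relation R ⊆ X × Y satisfies: for every (x,y) ∈ R there exists an ε-coupling β ∈ D R of c(x) and d(y), if and only if R is an ε-simulation, i.e., for all (x,y) ∈ R and all S ⊆ X, c(x)(S) ≤ d(y)(R(S)) + ε. -/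
open scoped ENNReal Classical

noncomputable section

/-- `β` is an ε-coupling of `μ` and `ν` with respect to the relation `R`. -/
def IsEpsCoupling {X Y : Type*} (R : Set (X × Y)) (μ : X → ℝ≥0∞) (ν : Y → ℝ≥0∞)
    (ε : ℝ≥0∞) (β : X × Y → ℝ≥0∞) : Prop :=
  IsSubdist β ∧ (∀ p : X × Y, p ∉ R → β p = 0) ∧
  (∀ x : X, (∑' y : Y, β (x, y)) ≤ μ x) ∧
  (∀ y : Y, (∑' x : X, β (x, y)) ≤ ν y) ∧
  mass μ Set.univ ≤ mass β R + ε

namespace Stmt19Aux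

lemma mass_indicator {S : Type*} (φ : S → ℝ≥0∞) (A : Set S) :
    mass φ A = ∑' x, A.indicator φ x := tsum_subtype A φ

lemma mass_univ {S : Type*} (φ : S → ℝ≥0∞) : mass φ Set.univ = ∑' x, φ x := by
  rw [mass_indicator]; simp

lemma mass_mono {S : Type*} (φ : S → ℝ≥0∞) {A B : Set S} (h : A ⊆ B) :
    mass φ A ≤ mass φ B := by
  rw [mass_indicator, mass_indicator]
  exact ENNReal.tsum_le_tsum fun x => Set.indicator_le_indicator_of_subset h (fun _ => zero_le) x

lemma mass_le_of_le {S : Type*} {φ ψ : S → ℝ≥0∞} (A : Set S) (h : ∀ x ∈ A, φ x ≤ ψ x) :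
    mass φ A ≤ mass ψ A := by
  rw [mass_indicator, mass_indicator]
  refine ENNReal.tsum_le_tsum fun x => ?_
  by_cases hx : x ∈ A <;> simp [hx, h x]

lemma mass_union_le {S : Type*} (φ : S → ℝ≥0∞) (A B : Set S) :
    mass φ (A ∪ B) ≤ mass φ A + mass φ B := by
  rw [mass_indicator, mass_indicator, mass_indicator, ← ENNReal.tsum_add]
  refine ENNReal.tsum_le_tsum fun x => ?_
  by_cases hA : x ∈ A <;> by_cases hB : x ∈ B <;> simp [Set.indicator_apply, hA, hB]

lemma mass_add_compl {S : Type*} (φ : S → ℝ≥0∞) (A : Set S) :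
    mass φ A + mass φ Aᶜ = mass φ Set.univ := by
  rw [mass_indicator, mass_indicator, mass_univ, ← ENNReal.tsum_add]
  congr 1; funext x
  by_cases hA : x ∈ A <;> simp [Set.indicator_apply, hA]

lemma mass_ne_top {S : Type*} {φ : S → ℝ≥0∞} (h : IsSubdist φ) (A : Set S) :
    mass φ A ≠ ⊤ :=
  (((mass_mono φ (Set.subset_univ A)).trans h).trans_lt (by norm_num)).ne

lemma mass_prod_left {X Y : Type*} (β : X × Y → ℝ≥0∞) (A : Set X) :
    mass β (A ×ˢ (Set.univ : Set Y)) = mass (fun x => ∑' y, β (x, y)) A := by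
  rw [mass_indicator, mass_indicator, ENNReal.tsum_prod']
  congr 1; funext x
  by_cases hA : x ∈ A
  · simp only [Set.indicator_of_mem hA]
    congr 1; funext y
    rw [Set.indicator_of_mem (by simp [hA] : (x, y) ∈ A ×ˢ (Set.univ : Set Y))]
  · simp only [Set.indicator_of_notMem hA]
    rw [ENNReal.tsum_eq_zero.mpr]
    intro y
    rw [Set.indicator_of_notMem (by simp [hA] : (x, y) ∉ A ×ˢ (Set.univ : Set Y))]

lemma mass_prod_right {X Y : Type*} (β : X × Y → ℝ≥0∞) (B : Set Y) :
    mass β ((Set.univ : Set X) ×ˢ B) = mass (fun y => ∑' x, β (x, y)) B := by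
  rw [mass_indicator, mass_indicator, ENNReal.tsum_prod', ENNReal.tsum_comm]
  congr 1; funext y
  by_cases hB : y ∈ B
  · simp only [Set.indicator_of_mem hB]
    congr 1; funext x
    rw [Set.indicator_of_mem (by simp [hB] : (x, y) ∈ (Set.univ : Set X) ×ˢ B)]
  · simp only [Set.indicator_of_notMem hB]
    rw [ENNReal.tsum_eq_zero.mpr]
    intro x
    rw [Set.indicator_of_notMem (by simp [hB] : (x, y) ∉ (Set.univ : Set X) ×ˢ B)]

lemma forward {X Y : Type*} {R : Set (X × Y)} {μ : X → ℝ≥0∞} {ν : Y → ℝ≥0∞} {ε : ℝ≥0∞}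
    (hμ : IsSubdist μ) {β : X × Y → ℝ≥0∞} (h : IsEpsCoupling R μ ν ε β) (S : Set X) :
    mass μ S ≤ mass ν {y : Y | ∃ x ∈ S, (x, y) ∈ R} + ε := by
  obtain ⟨-, hsupp, hmx, hmy, htot⟩ := h
  set T : Set Y := {y : Y | ∃ x ∈ S, (x, y) ∈ R} with hT
  have hRsub : R ⊆ (Sᶜ ×ˢ (Set.univ : Set Y)) ∪ ((Set.univ : Set X) ×ˢ T) := by
    rintro ⟨x, y⟩ hxy
    by_cases hx : x ∈ S
    · exact Or.inr (by simp [hT]; exact ⟨x, hx, hxy⟩)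
    · exact Or.inl (by simp [hx])
  have h1 : mass β R ≤ mass μ Sᶜ + mass ν T := by
    calc mass β R ≤ mass β ((Sᶜ ×ˢ (Set.univ : Set Y)) ∪ ((Set.univ : Set X) ×ˢ T)) :=
          mass_mono β hRsub
      _ ≤ mass β (Sᶜ ×ˢ (Set.univ : Set Y)) + mass β ((Set.univ : Set X) ×ˢ T) :=
          mass_union_le β _ _
      _ ≤ mass μ Sᶜ + mass ν T := by
          rw [mass_prod_left, mass_prod_right]
          exact add_le_add (mass_le_of_le _ fun x _ => hmx x) (mass_le_of_le _ fun y _ => hmy y)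
  have key : mass μ S + mass μ Sᶜ ≤ (mass ν T + ε) + mass μ Sᶜ := by
    rw [mass_add_compl]
    calc mass μ Set.univ ≤ mass β R + ε := htot
      _ ≤ (mass μ Sᶜ + mass ν T) + ε := add_le_add_left h1 ε
      _ = (mass ν T + ε) + mass μ Sᶜ := by ring
  exact (ENNReal.add_le_add_iff_right (mass_ne_top hμ Sᶜ)).mp key



lemma mass_union_disjoint {S : Type*} (φ : S → ℝ≥0∞) {A B : Set S} (h : Disjoint A B) :
    mass φ (A ∪ B) = mass φ A + mass φ B := by
  rw [mass_indicator, mass_indicator, mass_indicator, ← ENNReal.tsum_add,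
    Set.indicator_union_of_disjoint h]

lemma mass_coe_finset {S : Type*} (φ : S → ℝ≥0∞) (s : Finset S) :
    mass φ ↑s = ∑ x ∈ s, φ x := Finset.tsum_subtype s φ

/-- small tails -/
lemma tsum_split_finset {S : Type*} (φ : S → ℝ≥0∞) (s : Finset S) :
    ∑' x, φ x = (∑ x ∈ s, φ x) + ∑' x : ((↑s : Set S)ᶜ : Set S), φ x := by
  have : mass φ (↑s)ᶜ = ∑' x : ((↑s : Set S)ᶜ : Set S), φ x := rfl
  rw [← mass_univ, ← Set.union_compl_self (↑s : Set S),
    mass_union_disjoint φ disjoint_compl_right, mass_coe_finset, this]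

lemma exists_tail_small {S : Type*} {φ : S → ℝ≥0∞} (h : IsSubdist φ) {δ : ℝ≥0∞} (hδ : 0 < δ) :
    ∃ s : Finset S, mass φ (↑s)ᶜ ≤ δ := by
  set t := mass φ Set.univ with ht
  have htop : t ≠ ⊤ := (h.trans_lt (by norm_num)).ne
  by_cases hle : t ≤ δ
  · exact ⟨∅, by simpa using (mass_mono φ (Set.subset_univ _)).trans hle⟩
  push_neg at hle
  have h0 : t - δ < t := ENNReal.sub_lt_self htop (hδ.trans hle).ne' hδ.ne'
  have : t = ⨆ s : Finset S, ∑ x ∈ s, φ x := by rw [ht, mass_univ, ENNReal.tsum_eq_iSup_sum]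
  rw [this] at h0
  obtain ⟨s, hs⟩ := lt_iSup_iff.mp h0
  refine ⟨s, ?_⟩
  have hlt : t < (∑ x ∈ s, φ x) + δ :=
    (ENNReal.sub_lt_iff_lt_right (ne_top_of_lt hle) hle.le).mp (by rw [this]; exact hs)
  have hsplit : (∑ x ∈ s, φ x) + mass φ (↑s)ᶜ = t := by
    rw [ht, ← mass_coe_finset, ← mass_union_disjoint φ (disjoint_compl_right), Set.union_compl_self]
  have := hlt.le
  rw [← hsplit] at this
  have hfin : (∑ x ∈ s, φ x) ≠ ⊤ := by
    intro hc; rw [hc] at hsplit; simp [top_add] at hsplit; exact htop hsplit.symm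
  calc mass φ (↑s)ᶜ ≤ δ := by
        have := (ENNReal.add_le_add_iff_left hfin).mp this
        exact this

variable {X Y : Type*} (R : Set (X × Y)) (μ : X → ℝ≥0∞) (ν : Y → ℝ≥0∞)

/-- feasible sub-couplings -/
def Feas (β : X × Y → ℝ≥0∞) : Prop :=
  (∀ p : X × Y, p ∉ R → β p = 0) ∧ (∀ x, (∑' y, β (x, y)) ≤ μ x) ∧
    (∀ y, (∑' x, β (x, y)) ≤ ν y)

lemma feas_zero : Feas R μ ν 0 := ⟨fun _ _ => rfl, fun x => by simp, fun y => by simp⟩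

lemma isClosed_tsum_le {ι κ : Type*} (g : ι → κ) (c : ℝ≥0∞) :
    IsClosed {β : κ → ℝ≥0∞ | (∑' i, β (g i)) ≤ c} := by
  have : {β : κ → ℝ≥0∞ | (∑' i, β (g i)) ≤ c} =
      ⋂ s : Finset ι, {β : κ → ℝ≥0∞ | (∑ i ∈ s, β (g i)) ≤ c} := by
    ext β
    simp only [Set.mem_setOf_eq, Set.mem_iInter, ENNReal.tsum_eq_iSup_sum, iSup_le_iff]
  rw [this]
  exact isClosed_iInter fun s =>
    isClosed_le (continuous_finset_sum s fun i _ => continuous_apply (g i)) continuous_const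

lemma isClosed_feas : IsClosed {β : X × Y → ℝ≥0∞ | Feas R μ ν β} := by
  have : {β : X × Y → ℝ≥0∞ | Feas R μ ν β} =
      (⋂ p ∈ Rᶜ, {β : X × Y → ℝ≥0∞ | β p ≤ 0}) ∩
      ((⋂ x, {β : X × Y → ℝ≥0∞ | (∑' y, β (x, y)) ≤ μ x}) ∩
       (⋂ y, {β : X × Y → ℝ≥0∞ | (∑' x, β (x, y)) ≤ ν y})) := by
    ext β
    simp only [Feas, Set.mem_inter_iff, Set.mem_iInter, Set.mem_setOf_eq, Set.mem_compl_iff]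
    constructor
    · rintro ⟨h1, h2, h3⟩; exact ⟨fun p hp => (h1 p hp).le, h2, h3⟩
    · rintro ⟨h1, h2, h3⟩; exact ⟨fun p hp => le_antisymm (h1 p hp) zero_le, h2, h3⟩
  rw [this]
  refine IsClosed.inter (isClosed_biInter fun p _ => ?_)
    (IsClosed.inter (isClosed_iInter fun x => isClosed_tsum_le (fun y => (x, y)) (μ x))
      (isClosed_iInter fun y => isClosed_tsum_le (fun x => (x, y)) (ν y)))
  exact isClosed_le (continuous_apply p) continuous_const

variable {R μ ν}

lemma total_le_one (hμ : IsSubdist μ) {β : X × Y → ℝ≥0∞} (hβ : Feas R μ ν β) :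
    (∑' p, β p) ≤ 1 := by
  rw [ENNReal.tsum_prod']
  calc (∑' x, ∑' y, β (x, y)) ≤ ∑' x, μ x := ENNReal.tsum_le_tsum fun x => hβ.2.1 x
    _ ≤ 1 := by rw [← mass_univ]; exact hμ

/-- the monotone "defect" quantity -/
lemma Q_mono (hμ : IsSubdist μ) {β : X × Y → ℝ≥0∞} (hβ : Feas R μ ν β)
    {F F' : Finset X} {G G' : Finset Y} (hF : F ⊆ F') (hG : G ⊆ G') :
    (∑ x ∈ F', ∑ y ∈ G', β (x, y)) + mass μ (↑F')ᶜ + mass ν (↑G')ᶜ ≤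
    (∑ x ∈ F, ∑ y ∈ G, β (x, y)) + mass μ (↑F)ᶜ + mass ν (↑G)ᶜ := by
  -- step 1: shrink G' to G with F' fixed
  have step2 : ∀ (F₀ : Finset X), (∑ x ∈ F₀, ∑ y ∈ G', β (x, y)) + mass ν (↑G')ᶜ ≤
      (∑ x ∈ F₀, ∑ y ∈ G, β (x, y)) + mass ν (↑G)ᶜ := by
    intro F₀
    have hsplit : ∀ x, ∑ y ∈ G', β (x, y) = (∑ y ∈ G, β (x, y)) + ∑ y ∈ G' \ G, β (x, y) := by
      intro x; rw [add_comm, Finset.sum_sdiff hG]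
    simp only [hsplit, Finset.sum_add_distrib]
    rw [add_assoc]
    refine add_le_add_right ?_ _
    rw [Finset.sum_comm]
    have h1 : (∑ y ∈ G' \ G, ∑ x ∈ F₀, β (x, y)) ≤ ∑ y ∈ G' \ G, ν y :=
      Finset.sum_le_sum fun y _ => (ENNReal.sum_le_tsum F₀).trans (hβ.2.2 y)
    calc (∑ y ∈ G' \ G, ∑ x ∈ F₀, β (x, y)) + mass ν (↑G')ᶜ
        ≤ (∑ y ∈ G' \ G, ν y) + mass ν (↑G')ᶜ := add_le_add_left h1 _
      _ = mass ν (↑(G' \ G) ∪ (↑G')ᶜ) := by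
          rw [mass_union_disjoint ν, mass_coe_finset]
          · exact Set.disjoint_compl_right_iff_subset.mpr
              (by simp only [Finset.coe_sdiff]; exact Set.diff_subset)
      _ ≤ mass ν (↑G)ᶜ := mass_mono ν (by
          intro y hy
          rcases hy with hy | hy
          · simp only [Finset.coe_sdiff, Set.mem_diff, Finset.mem_coe] at hy
            simpa using hy.2
          · simp only [Set.mem_compl_iff, Finset.mem_coe] at hy ⊢
            exact fun hyG => hy (hG hyG))
  have step1 : (∑ x ∈ F', ∑ y ∈ G, β (x, y)) + mass μ (↑F')ᶜ ≤
      (∑ x ∈ F, ∑ y ∈ G, β (x, y)) + mass μ (↑F)ᶜ := by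
    have hsplit : (∑ x ∈ F', ∑ y ∈ G, β (x, y)) =
        (∑ x ∈ F, ∑ y ∈ G, β (x, y)) + ∑ x ∈ F' \ F, ∑ y ∈ G, β (x, y) := by
      rw [add_comm, Finset.sum_sdiff hF]
    rw [hsplit, add_assoc]
    refine add_le_add_right ?_ _
    have h1 : (∑ x ∈ F' \ F, ∑ y ∈ G, β (x, y)) ≤ ∑ x ∈ F' \ F, μ x :=
      Finset.sum_le_sum fun x _ => (ENNReal.sum_le_tsum G).trans (hβ.2.1 x)
    calc (∑ x ∈ F' \ F, ∑ y ∈ G, β (x, y)) + mass μ (↑F')ᶜ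
        ≤ (∑ x ∈ F' \ F, μ x) + mass μ (↑F')ᶜ := add_le_add_left h1 _
      _ = mass μ (↑(F' \ F) ∪ (↑F')ᶜ) := by
          rw [mass_union_disjoint μ, mass_coe_finset]
          · exact Set.disjoint_compl_right_iff_subset.mpr
              (by simp only [Finset.coe_sdiff]; exact Set.diff_subset)
      _ ≤ mass μ (↑F)ᶜ := mass_mono μ (by
          intro x hx
          rcases hx with hx | hx
          · simp only [Finset.coe_sdiff, Set.mem_diff, Finset.mem_coe] at hx
            simpa using hx.2
          · simp only [Set.mem_compl_iff, Finset.mem_coe] at hx ⊢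
            exact fun hxF => hx (hF hxF))
  calc (∑ x ∈ F', ∑ y ∈ G', β (x, y)) + mass μ (↑F')ᶜ + mass ν (↑G')ᶜ
      = ((∑ x ∈ F', ∑ y ∈ G', β (x, y)) + mass ν (↑G')ᶜ) + mass μ (↑F')ᶜ := by ring
    _ ≤ ((∑ x ∈ F', ∑ y ∈ G, β (x, y)) + mass ν (↑G)ᶜ) + mass μ (↑F')ᶜ :=
        add_le_add_left (step2 F') _
    _ = ((∑ x ∈ F', ∑ y ∈ G, β (x, y)) + mass μ (↑F')ᶜ) + mass ν (↑G)ᶜ := by ring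
    _ ≤ ((∑ x ∈ F, ∑ y ∈ G, β (x, y)) + mass μ (↑F)ᶜ) + mass ν (↑G)ᶜ :=
        add_le_add_left step1 _
    _ = (∑ x ∈ F, ∑ y ∈ G, β (x, y)) + mass μ (↑F)ᶜ + mass ν (↑G)ᶜ := by ring

/-- existence of a mass-maximal feasible flow -/
lemma exists_max (hμ : IsSubdist μ) (hν : IsSubdist ν) :
    ∃ β : X × Y → ℝ≥0∞, Feas R μ ν β ∧
      ∀ β' : X × Y → ℝ≥0∞, Feas R μ ν β' → (∑' p, β' p) ≤ ∑' p, β p := by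
  classical
  set M : ℝ≥0∞ := ⨆ β : {β : X × Y → ℝ≥0∞ // Feas R μ ν β}, ∑' p, (β : X × Y → ℝ≥0∞) p with hM
  have hMle : ∀ β : X × Y → ℝ≥0∞, Feas R μ ν β → (∑' p, β p) ≤ M := by
    intro β hβ; exact le_iSup (fun β : {β : X × Y → ℝ≥0∞ // Feas R μ ν β} =>
      ∑' p, (β : X × Y → ℝ≥0∞) p) ⟨β, hβ⟩
  have hM1 : M ≤ 1 := by
    rw [hM]; exact iSup_le fun β => total_le_one hμ β.2
  have hMtop : M ≠ ⊤ := (hM1.trans_lt (by norm_num)).ne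
  -- near-maximal flows
  have hnear : ∀ δ : ℝ≥0∞, 0 < δ → ∃ β : X × Y → ℝ≥0∞, Feas R μ ν β ∧ M ≤ (∑' p, β p) + δ := by
    intro δ hδ
    by_cases hle : M ≤ δ
    · exact ⟨0, feas_zero R μ ν, by simpa using hle ⟩
    push_neg at hle
    have h0 : M - δ < M := ENNReal.sub_lt_self hMtop (hδ.trans hle).ne' hδ.ne'
    rw [hM] at h0
    obtain ⟨⟨β, hβ⟩, hs⟩ := lt_iSup_iff.mp h0
    refine ⟨β, hβ, ?_⟩
    exact ((ENNReal.sub_lt_iff_lt_right (ne_top_of_lt hle) hle.le).mp hs).le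
  -- the compact family
  let ι := Finset X × Finset Y × {δ : ℝ≥0∞ // 0 < δ}
  let K : ι → Set (X × Y → ℝ≥0∞) := fun i =>
    {β | Feas R μ ν β} ∩ {β | M ≤ (∑ x ∈ i.1, ∑ y ∈ i.2.1, β (x, y)) +
      mass μ (↑i.1)ᶜ + mass ν (↑i.2.1)ᶜ + i.2.2}
  have hKne : ∀ i, (K i).Nonempty := by
    rintro ⟨F, G, δ, hδ⟩
    obtain ⟨β, hβ, hMβ⟩ := hnear δ hδ
    refine ⟨β, hβ, ?_⟩
    have : (∑' p, β p) ≤ (∑ x ∈ F, ∑ y ∈ G, β (x, y)) + mass μ (↑F)ᶜ + mass ν (↑G)ᶜ := by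
      rw [ENNReal.tsum_prod']
      have hsplitX : (∑' x, ∑' y, β (x, y)) =
          (∑ x ∈ F, ∑' y, β (x, y)) + ∑' x : ((↑F : Set X)ᶜ : Set X), ∑' y, β (x, y) :=
        tsum_split_finset (fun x => ∑' y, β (x, y)) F
      have h2 : (∑' x : ((↑F : Set X)ᶜ : Set X), ∑' y, β (x, y)) ≤ mass μ (↑F)ᶜ :=
        ENNReal.tsum_le_tsum fun x => hβ.2.1 x
      have hsplitY : ∀ x, (∑' y, β (x, y)) =
          (∑ y ∈ G, β (x, y)) + ∑' y : ((↑G : Set Y)ᶜ : Set Y), β (x, y) := fun x =>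
        tsum_split_finset (fun y => β (x, y)) G
      calc (∑' x, ∑' y, β (x, y))
          = (∑ x ∈ F, ∑' y, β (x, y)) + ∑' x : ((↑F : Set X)ᶜ : Set X), ∑' y, β (x, y) := hsplitX
        _ ≤ (∑ x ∈ F, ((∑ y ∈ G, β (x, y)) + ∑' y : ((↑G : Set Y)ᶜ : Set Y), β (x, y)))
              + mass μ (↑F)ᶜ := add_le_add (Finset.sum_le_sum fun x _ => (hsplitY x).le) h2
        _ = ((∑ x ∈ F, ∑ y ∈ G, β (x, y)) +
              ∑ x ∈ F, ∑' y : ((↑G : Set Y)ᶜ : Set Y), β (x, y)) + mass μ (↑F)ᶜ := by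
            rw [Finset.sum_add_distrib]
        _ ≤ ((∑ x ∈ F, ∑ y ∈ G, β (x, y)) + mass ν (↑G)ᶜ) + mass μ (↑F)ᶜ := by
            refine add_le_add_left (add_le_add_right ?_ _) _
            have : (∑ x ∈ F, ∑' y : ((↑G : Set Y)ᶜ : Set Y), β (x, y)) ≤
                ∑' x, ∑' y : ((↑G : Set Y)ᶜ : Set Y), β (x, y) := ENNReal.sum_le_tsum F
            refine this.trans ?_
            rw [ENNReal.tsum_comm]
            exact ENNReal.tsum_le_tsum fun y => hβ.2.2 y
        _ = (∑ x ∈ F, ∑ y ∈ G, β (x, y)) + mass μ (↑F)ᶜ + mass ν (↑G)ᶜ := by ring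
    calc M ≤ (∑' p, β p) + δ := hMβ
      _ ≤ (∑ x ∈ F, ∑ y ∈ G, β (x, y)) + mass μ (↑F)ᶜ + mass ν (↑G)ᶜ + δ := add_le_add_left this δ
  have hKdir : Directed (· ⊇ ·) K := by
    rintro ⟨F₁, G₁, δ₁, hδ₁⟩ ⟨F₂, G₂, δ₂, hδ₂⟩
    refine ⟨⟨F₁ ∪ F₂, G₁ ∪ G₂, min δ₁ δ₂, lt_min hδ₁ hδ₂⟩, ?_, ?_⟩
    · rintro β ⟨hβ, hQ⟩
      simp only [Set.mem_setOf_eq] at hQ ⊢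
      exact ⟨hβ, le_trans hQ (add_le_add
        (Q_mono hμ hβ Finset.subset_union_left Finset.subset_union_left) (min_le_left _ _))⟩
    · rintro β ⟨hβ, hQ⟩
      simp only [Set.mem_setOf_eq] at hQ ⊢
      exact ⟨hβ, le_trans hQ (add_le_add
        (Q_mono hμ hβ Finset.subset_union_right Finset.subset_union_right) (min_le_right _ _))⟩
  have hKc : ∀ i, IsClosed (K i) := by
    rintro ⟨F, G, δ, hδ⟩
    refine (isClosed_feas R μ ν).inter ?_
    exact isClosed_le continuous_const (by
      refine Continuous.add (Continuous.add (Continuous.add ?_ continuous_const)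
        continuous_const) continuous_const
      exact continuous_finset_sum F fun x _ => continuous_finset_sum G fun y _ =>
        continuous_apply (x, y))
  have : Nonempty ι := ⟨⟨∅, ∅, 1, one_pos⟩⟩
  have hne : (⋂ i, K i).Nonempty :=
    IsCompact.nonempty_iInter_of_directed_nonempty_isCompact_isClosed K hKdir hKne
      (fun i => (hKc i).isCompact) hKc
  obtain ⟨β, hβ⟩ := hne
  simp only [Set.mem_iInter] at hβ
  have hfeas : Feas R μ ν β := (hβ ⟨∅, ∅, 1, one_pos⟩).1
  refine ⟨β, hfeas, fun β' hβ' => (hMle β' hβ').trans ?_⟩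
  -- show M ≤ ∑' p, β p
  refine ENNReal.le_of_forall_pos_le_add fun δ hδ hlt => ?_
  have hδ' : (0 : ℝ≥0∞) < δ / 3 := by
    simp only [ENNReal.div_pos_iff]
    exact ⟨by exact_mod_cast hδ.ne', by norm_num⟩
  obtain ⟨F, hF⟩ := exists_tail_small hμ hδ'
  obtain ⟨G, hG⟩ := exists_tail_small hν hδ'
  have h := (hβ ⟨F, G, δ / 3, hδ'⟩).2
  simp only [Set.mem_setOf_eq] at h
  have hsum : (∑ x ∈ F, ∑ y ∈ G, β (x, y)) ≤ ∑' p, β p := by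
    rw [ENNReal.tsum_prod']
    refine le_trans (Finset.sum_le_sum fun x _ => ENNReal.sum_le_tsum G) (ENNReal.sum_le_tsum F)
  calc M ≤ (∑ x ∈ F, ∑ y ∈ G, β (x, y)) + mass μ (↑F)ᶜ + mass ν (↑G)ᶜ + δ / 3 := h
    _ ≤ (∑' p, β p) + δ / 3 + δ / 3 + δ / 3 := by
        refine add_le_add (add_le_add (add_le_add hsum hF) hG) le_rfl
    _ = (∑' p, β p) + (δ / 3 + δ / 3 + δ / 3) := by ring
    _ ≤ (∑' p, β p) + δ := by
        rw [ENNReal.add_thirds]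

-- stage 3 additions (to be appended inside namespace Stmt19Aux, after stage 2)

lemma mass_congr {S : Type*} {φ : S → ℝ≥0∞} {A B : Set S}
    (h : ∀ x, φ x ≠ 0 → (x ∈ A ↔ x ∈ B)) : mass φ A = mass φ B := by
  rw [mass_indicator, mass_indicator]
  congr 1
  funext x
  by_cases h0 : φ x = 0
  · by_cases hA : x ∈ A <;> by_cases hB : x ∈ B <;> simp [Set.indicator_apply, hA, hB, h0]
  · rw [Set.indicator_apply, Set.indicator_apply, if_congr (h x h0) rfl rfl]

lemma mass_eq_of_eqOn {S : Type*} {φ ψ : S → ℝ≥0∞} {A : Set S}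
    (h : ∀ x ∈ A, φ x = ψ x) : mass φ A = mass ψ A :=
  le_antisymm (mass_le_of_le A fun x hx => (h x hx).le)
    (mass_le_of_le A fun x hx => (h x hx).ge)

section Augment

variable {X Y : Type*}

/-- add `δ` at a single point -/
def addS (β : X × Y → ℝ≥0∞) (p : X × Y) (δ : ℝ≥0∞) : X × Y → ℝ≥0∞ :=
  fun q => β q + if q = p then δ else 0

lemma addS_total (β : X × Y → ℝ≥0∞) (p : X × Y) (δ : ℝ≥0∞) :
    ∑' q, addS β p δ q = (∑' q, β q) + δ := by
  simp only [addS]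
  rw [ENNReal.tsum_add]
  congr 1
  exact tsum_ite_eq p (fun _ => δ)

lemma addS_le (β : X × Y → ℝ≥0∞) (p : X × Y) (δ : ℝ≥0∞) (q : X × Y) :
    β q ≤ addS β p δ q := le_self_add

lemma addS_margX (β : X × Y → ℝ≥0∞) (a : X) (b : Y) (δ : ℝ≥0∞) (x : X) :
    (∑' y, addS β (a, b) δ (x, y)) = (∑' y, β (x, y)) + if x = a then δ else 0 := by
  simp only [addS]
  rw [ENNReal.tsum_add]
  congr 1
  by_cases hx : x = a
  · subst hx
    rw [if_pos rfl, ← tsum_ite_eq b (fun _ => δ)]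
    congr 1; funext y; simp [Prod.ext_iff]
  · rw [if_neg hx, ENNReal.tsum_eq_zero.mpr]
    intro y; simp [Prod.ext_iff, hx]

lemma addS_margY (β : X × Y → ℝ≥0∞) (a : X) (b : Y) (δ : ℝ≥0∞) (y : Y) :
    (∑' x, addS β (a, b) δ (x, y)) = (∑' x, β (x, y)) + if y = b then δ else 0 := by
  simp only [addS]
  rw [ENNReal.tsum_add]
  congr 1
  by_cases hy : y = b
  · subst hy
    rw [if_pos rfl, ← tsum_ite_eq a (fun _ => δ)]
    congr 1; funext x; simp [Prod.ext_iff]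
  · rw [if_neg hy, ENNReal.tsum_eq_zero.mpr]
    intro x; simp [Prod.ext_iff, hy]

variable (R : Set (X × Y)) (μ : X → ℝ≥0∞)

/-- reachability by alternating paths of length `n` from a deficient source -/
def Reach (β : X × Y → ℝ≥0∞) : ℕ → X → Prop
  | 0, x => (∑' y, β (x, y)) < μ x
  | n + 1, x => Reach β n x ∨ ∃ x' y', Reach β n x' ∧ (x', y') ∈ R ∧ 0 < β (x, y')

variable {R μ}

lemma reach_mono {β β' : X × Y → ℝ≥0∞}
    (h0 : ∀ a, (∑' y, β (a, y)) < μ a → (∑' y, β' (a, y)) < μ a)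
    (hs : ∀ p, 0 < β p → 0 < β' p) :
    ∀ n x, Reach R μ β n x → Reach R μ β' n x := by
  intro n
  induction n with
  | zero => exact fun x h => h0 x h
  | succ n ih =>
    rintro x (h | ⟨x', y', h1, h2, h3⟩)
    · exact Or.inl (ih x h)
    · exact Or.inr ⟨x', y', ih x' h1, h2, hs _ h3⟩

variable {ν : Y → ℝ≥0∞}

lemma augment (hμ : IsSubdist μ) (hν : IsSubdist ν) :
    ∀ n : ℕ, ∀ β : X × Y → ℝ≥0∞, Feas R μ ν β → ∀ x y, Reach R μ β n x → (x, y) ∈ R →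
      (∑' x', β (x', y)) < ν y → ∃ β', Feas R μ ν β' ∧ (∑' p, β p) < ∑' p, β' p := by
  have hν1 : ∀ b, ν b ≤ 1 := fun b => (ENNReal.le_tsum b).trans (by rw [← mass_univ]; exact hν)
  intro n
  induction n with
  | zero =>
    intro β hβ x y hr hR hy
    have hrx : (∑' y', β (x, y')) < μ x := hr
    set δ : ℝ≥0∞ := min (μ x - ∑' y', β (x, y')) (ν y - ∑' x', β (x', y)) with hδ
    have hδ0 : 0 < δ := lt_min (tsub_pos_of_lt hrx) (tsub_pos_of_lt hy)
    refine ⟨addS β (x, y) δ, ⟨?_, ?_, ?_⟩, ?_⟩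
    · intro p hp
      have hne : p ≠ (x, y) := fun h => hp (h ▸ hR)
      simp [addS, hne, hβ.1 p hp]
    · intro a
      rw [addS_margX]
      by_cases ha : a = x
      · subst ha
        rw [if_pos rfl]
        calc (∑' y', β (a, y')) + δ ≤ (∑' y', β (a, y')) + (μ a - ∑' y', β (a, y')) :=
              add_le_add_right (min_le_left _ _) _
          _ = μ a := add_tsub_cancel_of_le hrx.le
      · rw [if_neg ha, add_zero]; exact hβ.2.1 a
    · intro b
      rw [addS_margY]
      by_cases hb : b = y
      · subst hb
        rw [if_pos rfl]
        calc (∑' x', β (x', b)) + δ ≤ (∑' x', β (x', b)) + (ν b - ∑' x', β (x', b)) :=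
              add_le_add_right (min_le_right _ _) _
          _ = ν b := add_tsub_cancel_of_le hy.le
      · rw [if_neg hb, add_zero]; exact hβ.2.2 b
    · rw [addS_total]
      exact ENNReal.lt_add_right ((total_le_one hμ hβ).trans_lt (by norm_num)).ne hδ0.ne'
  | succ n ih =>
    intro β hβ x y hr hR hy
    rcases hr with hr | ⟨x', y', hx', hR', hc⟩
    · exact ih β hβ x y hr hR hy
    have hcR : (x, y') ∈ R := by
      by_contra hq
      rw [hβ.1 _ hq] at hc
      exact lt_irrefl 0 hc
    have hctop : β (x, y') ≠ ⊤ := by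
      refine (lt_of_le_of_lt ?_ (lt_of_le_of_lt (hν1 y') (by norm_num : (1:ℝ≥0∞) < ⊤))).ne
      exact (ENNReal.le_tsum x).trans (hβ.2.2 y')
    set δ : ℝ≥0∞ := min (β (x, y') / 2) (ν y - ∑' x'', β (x'', y)) with hδ
    have hδ0 : 0 < δ := lt_min (ENNReal.half_pos hc.ne') (tsub_pos_of_lt hy)
    have hδc : δ < β (x, y') := (min_le_left _ _).trans_lt (ENNReal.half_lt_self hc.ne' hctop)
    set γ : X × Y → ℝ≥0∞ := fun q => if q = (x, y') then β q - δ else β q with hγ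
    have hβγ : β = addS γ (x, y') δ := by
      funext q
      simp only [addS, hγ]
      by_cases hq : q = (x, y')
      · subst hq; rw [if_pos rfl, if_pos rfl, tsub_add_cancel_of_le hδc.le]
      · simp [hq]
    have hγβ : ∀ q, γ q ≤ β q := by
      intro q
      by_cases hq : q = (x, y') <;> simp [hγ, hq, tsub_le_self]
    set β₁ : X × Y → ℝ≥0∞ := addS γ (x, y) δ with hβ₁
    have hmx : ∀ a, (∑' y'', β₁ (a, y'')) = ∑' y'', β (a, y'') := by
      intro a
      rw [hβ₁, addS_margX, show (∑' y'', β (a, y'')) = ∑' y'', addS γ (x, y') δ (a, y'') from by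
        rw [← hβγ], addS_margX]
    have hγfinY : ∀ b, (∑' x'', γ (x'', b)) ≤ ν b := by
      intro b
      exact (ENNReal.tsum_le_tsum fun q => hγβ _).trans (hβ.2.2 b)
    have hmyβ : ∀ b, (∑' x'', β (x'', b)) = (∑' x'', γ (x'', b)) + if b = y' then δ else 0 := by
      intro b
      conv_lhs => rw [hβγ]
      exact addS_margY γ x y' δ b
    have hmyβ₁ : ∀ b, (∑' x'', β₁ (x'', b)) = (∑' x'', γ (x'', b)) + if b = y then δ else 0 :=
      fun b => addS_margY γ x y δ b
    have hfeas₁ : Feas R μ ν β₁ := by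
      refine ⟨?_, ?_, ?_⟩
      · intro p hp
        have h1 : p ≠ (x, y) := fun h => hp (h ▸ hR)
        have h2 : p ≠ (x, y') := fun h => hp (h ▸ hcR)
        simp [hβ₁, addS, hγ, h1, h2, hβ.1 p hp]
      · intro a; rw [hmx]; exact hβ.2.1 a
      · intro b
        rw [hmyβ₁]
        by_cases hb : b = y
        · subst hb
          rw [if_pos rfl]
          calc (∑' x'', γ (x'', b)) + δ ≤ (∑' x'', β (x'', b)) + δ :=
                add_le_add_left (ENNReal.tsum_le_tsum fun q => hγβ _) _
            _ ≤ (∑' x'', β (x'', b)) + (ν b - ∑' x'', β (x'', b)) :=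
                add_le_add_right (min_le_right _ _) _
            _ = ν b := add_tsub_cancel_of_le hy.le
        · rw [if_neg hb, add_zero]; exact hγfinY b
    have htot₁ : (∑' p, β₁ p) = ∑' p, β p := by
      rw [hβ₁, addS_total]
      conv_rhs => rw [hβγ, addS_total]
    have hy'lt : (∑' x'', β₁ (x'', y')) < ν y' := by
      by_cases hyy : y' = y
      · rw [hmyβ₁, if_pos hyy]
        have he : (∑' x'', β (x'', y')) = (∑' x'', γ (x'', y')) + δ := by
          rw [hmyβ y', if_pos rfl]
        rw [← he]
        exact hyy ▸ hy
      · rw [hmyβ₁, if_neg hyy, add_zero]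
        have h1 : (∑' x'', γ (x'', y')) < (∑' x'', β (x'', y')) := by
          rw [hmyβ y', if_pos rfl]
          exact ENNReal.lt_add_right
            ((hγfinY y').trans_lt ((hν1 y').trans_lt (by norm_num))).ne hδ0.ne'
        exact h1.trans_le (hβ.2.2 y')
    have hreach₁ : Reach R μ β₁ n x' := by
      refine reach_mono (fun a ha => ?_) (fun p hp => ?_) n x' hx'
      · rwa [hmx]
      · by_cases hq : p = (x, y')
        · subst hq
          calc (0 : ℝ≥0∞) < β (x, y') - δ := tsub_pos_of_lt hδc
            _ = γ (x, y') := by rw [hγ]; simp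
            _ ≤ β₁ (x, y') := addS_le _ _ _ _
        · calc (0 : ℝ≥0∞) < β p := hp
            _ = γ p := by rw [hγ]; simp [hq]
            _ ≤ β₁ p := addS_le _ _ _ _
    obtain ⟨β₂, hfeas₂, hlt₂⟩ := ih β₁ hfeas₁ x' y' hreach₁ hR' hy'lt
    exact ⟨β₂, hfeas₂, htot₁ ▸ hlt₂⟩

end Augment

section Backward

variable {X Y : Type*} {R : Set (X × Y)} {μ : X → ℝ≥0∞} {ν : Y → ℝ≥0∞} {ε : ℝ≥0∞}

lemma backward (hμ : IsSubdist μ) (hν : IsSubdist ν)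
    (hcut : ∀ S : Set X, mass μ S ≤ mass ν {y : Y | ∃ x ∈ S, (x, y) ∈ R} + ε) :
    ∃ β : X × Y → ℝ≥0∞, IsEpsCoupling R μ ν ε β := by
  obtain ⟨β, hβ, hmax⟩ := exists_max (R := R) hμ hν
  have hmassR : mass β R = ∑' p, β p := by
    rw [← mass_univ]
    exact mass_congr fun p hp => ⟨fun _ => trivial, fun _ => by
      by_contra hq; exact hp (hβ.1 p hq)⟩
  refine ⟨β, ?_, hβ.1, hβ.2.1, hβ.2.2, ?_⟩
  · rw [IsSubdist, mass_univ]; exact total_le_one hμ hβ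
  rw [hmassR]
  -- the cut argument
  set S : Set X := {x | ∃ n, Reach R μ β n x} with hS
  set T : Set Y := {y | ∃ x ∈ S, (x, y) ∈ R} with hT
  -- Claim A : every y ∈ T is saturated
  have claimA : ∀ y ∈ T, (∑' x, β (x, y)) = ν y := by
    rintro y ⟨x, ⟨n, hxn⟩, hxyR⟩
    refine le_antisymm (hβ.2.2 y) (not_lt.mp fun hlt => ?_)
    obtain ⟨β', hβ', hgt⟩ := augment hμ hν n β hβ x y hxn hxyR hlt
    exact absurd (hmax β' hβ') (not_le.mpr hgt)
  -- Claim B : every x ∉ S has full marginal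
  have claimB : ∀ x ∉ S, (∑' y, β (x, y)) = μ x := by
    intro x hx
    refine le_antisymm (hβ.2.1 x) (not_lt.mp fun hlt => hx ⟨0, hlt⟩)
  -- Claim C
  have claimC : ∀ x y, β (x, y) ≠ 0 → (x ∈ S ↔ y ∈ T) := by
    intro x y h0
    constructor
    · intro hx
      have hR : (x, y) ∈ R := by
        by_contra hq; exact h0 (hβ.1 _ hq)
      exact ⟨x, hx, hR⟩
    · rintro ⟨x', hx', hR'⟩
      obtain ⟨n, hn⟩ := hx'
      exact ⟨n + 1, Or.inr ⟨x', y, hn, hR', pos_iff_ne_zero.mpr h0⟩⟩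
  -- decomposition of the total mass
  have hdec : (∑' p, β p) = mass β (S ×ˢ (Set.univ : Set Y)) +
      mass β (Sᶜ ×ˢ (Set.univ : Set Y)) := by
    rw [← mass_union_disjoint β (by
      rw [Set.disjoint_left]
      rintro ⟨x, y⟩ hp hq
      exact (hq.1 : x ∈ Sᶜ) hp.1)]
    rw [← mass_univ]
    congr 1
    ext ⟨x, y⟩
    by_cases hx : x ∈ S <;> simp [hx]
  have h1 : mass β (S ×ˢ (Set.univ : Set Y)) = mass ν T := by
    have e1 : mass β (S ×ˢ (Set.univ : Set Y)) = mass β ((Set.univ : Set X) ×ˢ T) :=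
      mass_congr (by
        rintro ⟨x, y⟩ h0
        have := claimC x y h0
        simp only [Set.mem_prod, Set.mem_univ, and_true, true_and]
        exact this)
    rw [e1, mass_prod_right]
    exact mass_eq_of_eqOn fun y hy => claimA y hy
  have h2 : mass β (Sᶜ ×ˢ (Set.univ : Set Y)) = mass μ Sᶜ := by
    rw [mass_prod_left]
    exact mass_eq_of_eqOn fun x hx => claimB x hx
  have hfin : mass μ Sᶜ ≠ ⊤ := mass_ne_top hμ Sᶜ
  calc mass μ Set.univ = mass μ S + mass μ Sᶜ := (mass_add_compl μ S).symm
    _ ≤ (mass ν T + ε) + mass μ Sᶜ := add_le_add_left (hcut S) _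
    _ = (mass ν T + mass μ Sᶜ) + ε := by ring
    _ = (∑' p, β p) + ε := by rw [← h1, ← h2, ← hdec]

end Backward

end Stmt19Aux

theorem stmt19 {X Y : Type*} (c : X → X → ℝ≥0∞) (d : Y → Y → ℝ≥0∞)
    (hc : ∀ x, IsSubdist (c x)) (hd : ∀ y, IsSubdist (d y))
    (R : Set (X × Y)) (ε : ℝ≥0∞) :
    (∀ p ∈ R, ∃ β : X × Y → ℝ≥0∞, IsEpsCoupling R (c p.1) (d p.2) ε β) ↔
      (∀ p ∈ R, ∀ S : Set X,
        mass (c p.1) S ≤ mass (d p.2) {y : Y | ∃ x ∈ S, (x, y) ∈ R} + ε) := by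
  constructor
  · intro h p hp S
    obtain ⟨β, hβ⟩ := h p hp
    exact Stmt19Aux.forward (hc p.1) hβ S
  · intro h p hp
    exact Stmt19Aux.backward (hc p.1) (hd p.2) (h p hp)
end
end
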